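/- Let γ be an affine isometry of a finite-dimensional Euclidean affine space A, and let E_1 be a γ-invariant affine subspace contained in Min(γ). Let E_2 be any affine orthogonal complement of E_1. Then (t^{−v_γ}∘γ)(E_2) = E_2, where t^{−v_γ} is translation by −v_γ. -/

import Mathlib

noncomputable section

variable {V : Type*} [NormedAddCommGroup V] [InnerProductSpace ℝ V] [FiniteDimensional ℝ V]

/-- `d_γ = inf_x d(x, γx)` for an affine isometry `γ` of the Euclidean affine space `V`. -/
def minDisp (γ : V ≃ᵃⁱ[ℝ] V) : ℝ := ⨅ x, dist x (γ x)

/-- `Min(γ) = {x : d(x, γx) = d_γ}`. -/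
def minSet (γ : V ≃ᵃⁱ[ℝ] V) : Set V := {x | dist x (γ x) = minDisp γ}

/-- Let `γ` be an affine isometry of a finite-dimensional Euclidean affine
space, let `E₁` be a `γ`-invariant affine subspace contained in `Min(γ)`, and let `E₂` be an
affine orthogonal complement of `E₁` (an affine subspace whose direction is the orthogonal
complement of the direction of `E₁`).  Then `t^{-v_γ} ∘ γ` maps `E₂` onto `E₂`, where `v_γ`
is the vector by which `γ` translates `Min(γ)`. -/
theorem translate_comp_isometry_stabilizes_orthocomplement
    (γ : V ≃ᵃⁱ[ℝ] V) (v : V)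
    (hMin : (minSet γ).Nonempty)
    (hv : ∀ x ∈ minSet γ, γ x = x + v)
    (E₁ E₂ : AffineSubspace ℝ V)
    (hE₁ne : (E₁ : Set V).Nonempty) (hE₂ne : (E₂ : Set V).Nonempty)
    (hE₁min : (E₁ : Set V) ⊆ minSet γ)
    (hE₁inv : (fun x => γ x) '' (E₁ : Set V) = (E₁ : Set V))
    (hE₂dir : E₂.direction = E₁.directionᗮ) :
    (fun x => γ x - v) '' (E₂ : Set V) = (E₂ : Set V) := by
  -- intersection point
  have hsup : E₁.direction ⊔ E₂.direction = ⊤ := by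
    rw [hE₂dir, Submodule.sup_orthogonal_of_hasOrthogonalProjection]
  obtain ⟨p, hp₁, hp₂⟩ :=
    AffineSubspace.inter_nonempty_of_nonempty_of_sup_direction_eq_top hE₁ne hE₂ne hsup
  set e := γ.linearIsometryEquiv with he
  -- γ.linear preserves E₁.direction
  have hmapE₁ : AffineSubspace.map γ.toAffineIsometry.toAffineMap E₁ = E₁ := by
    apply AffineSubspace.coe_injective
    rw [AffineSubspace.coe_map]
    exact hE₁inv
  have hdir : E₁.direction.map (e : V →ₗ[ℝ] V) = E₁.direction := by
    have := congrArg AffineSubspace.direction hmapE₁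
    rwa [AffineSubspace.map_direction] at this
  have hmem : ∀ u ∈ E₁.direction, e u ∈ E₁.direction := by
    intro u hu
    rw [← hdir]; exact Submodule.mem_map_of_mem hu
  have hmem' : ∀ u ∈ E₁.direction, e.symm u ∈ E₁.direction := by
    intro u hu
    rw [← hdir] at hu
    obtain ⟨w, hw, hwe⟩ := hu
    simpa [← hwe] using hw
  -- e preserves the orthogonal complement
  have horth : ∀ w ∈ E₁.directionᗮ, e w ∈ E₁.directionᗮ := by
    intro w hw u hu
    have : (inner ℝ (e.symm u) w : ℝ) = 0 := hw _ (hmem' u hu)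
    calc (inner ℝ u (e w) : ℝ) = inner ℝ (e (e.symm u)) (e w) := by simp
      _ = inner ℝ (e.symm u) w := e.inner_map_map _ _
      _ = 0 := this
  have horth' : ∀ w ∈ E₁.directionᗮ, e.symm w ∈ E₁.directionᗮ := by
    intro w hw u hu
    have : (inner ℝ (e u) w : ℝ) = 0 := hw _ (hmem u hu)
    calc (inner ℝ u (e.symm w) : ℝ) = inner ℝ (e u) (e (e.symm w)) := (e.inner_map_map _ _).symm
      _ = inner ℝ (e u) w := by simp
      _ = 0 := this
  have hγp : γ p = p + v := hv p (hE₁min hp₁)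
  have key : ∀ x, γ x - v = e (x - p) + p := by
    intro x
    have : γ x = e (x - p) + γ p := by
      have := γ.map_vadd p (x - p)
      simpa [vadd_eq_add, sub_add_cancel] using this
    rw [this, hγp]; abel
  ext x
  constructor
  · rintro ⟨y, hy, rfl⟩
    show γ y - v ∈ (E₂ : Set V)
    rw [key y]
    have hyd : y - p ∈ E₂.direction := by
      simpa [vsub_eq_sub] using AffineSubspace.vsub_mem_direction hy hp₂
    have : e (y - p) ∈ E₂.direction := by
      rw [hE₂dir] at hyd ⊢; exact horth _ hyd
    simpa [vadd_eq_add] using AffineSubspace.vadd_mem_of_mem_direction this hp₂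
  · intro hx
    refine ⟨e.symm (x - p) + p, ?_, ?_⟩
    · have hxd : x - p ∈ E₂.direction := by
        simpa [vsub_eq_sub] using AffineSubspace.vsub_mem_direction hx hp₂
      have : e.symm (x - p) ∈ E₂.direction := by
        rw [hE₂dir] at hxd ⊢; exact horth' _ hxd
      simpa [vadd_eq_add] using AffineSubspace.vadd_mem_of_mem_direction this hp₂
    · simp [key]

end
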